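/- Let $\mathbb{F}$ be a field of characteristic $0$, $U$ an associative $\mathbb{F}$-algebra, $f \in U$ invertible with $\mathrm{ad}(f)$ locally nilpotent, and let $M$ be a $U$-module. For $x \in \mathbb{F}$ let $\Phi^x M$ be $M$ with action $u \cdot v^x := (\Theta_x(u) v)^x$, $\Theta_x(u) = \sum_i \binom{x}{i}\mathrm{ad}(f)^i(u)f^{-i}$. Then $\Phi^x M$ is a well-defined $U$-module and $\Phi^x(\Phi^y M) \cong \Phi^{x+y} M$; in particular $\Phi^x \circ \Phi^{-x} \cong \mathrm{Id}$ and $\Phi^n M \cong M$ for $n \in \mathbb{Z}$. -/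

import Mathlib

open Finset Polynomial

section Twist

variable {F : Type*} [Field F] [CharZero F]

/-- generalized binomial coefficient -/
private noncomputable def cb (x : F) (i : ℕ) : F :=
  (∏ j ∈ Finset.range i, (x - (j : F))) / (Nat.factorial i : F)

private lemma cb_zero (x : F) : cb x 0 = 1 := by simp [cb]

private lemma cb_nat_zero (i : ℕ) : cb (0 : F) (i + 1) = 0 := by
  have : (∏ j ∈ Finset.range (i + 1), ((0 : F) - (j : F))) = 0 :=
    Finset.prod_eq_zero (Finset.mem_range.mpr (Nat.succ_pos i)) (by simp)
  rw [cb, this, zero_div]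

private lemma cb_pascal (x : F) (i : ℕ) :
    cb (x + 1) (i + 1) = cb x (i + 1) + cb x i := by
  have h1 : (∏ j ∈ Finset.range (i + 1), (x + 1 - (j : F)))
      = (x + 1) * ∏ j ∈ Finset.range i, (x - (j : F)) := by
    rw [Finset.prod_range_succ']
    have e : ∀ j ∈ Finset.range i, (x + 1 - ((j + 1 : ℕ) : F)) = x - (j : F) := by
      intro j _; push_cast; ring
    rw [Finset.prod_congr rfl e]
    push_cast; ring
  have h2 : (∏ j ∈ Finset.range (i + 1), (x - (j : F)))
      = (∏ j ∈ Finset.range i, (x - (j : F))) * (x - i) := Finset.prod_range_succ _ _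
  have hif : ((Nat.factorial i : F)) ≠ 0 := Nat.cast_ne_zero.mpr (Nat.factorial_ne_zero i)
  have hif1 : ((Nat.factorial (i + 1) : F)) ≠ 0 := Nat.cast_ne_zero.mpr (Nat.factorial_ne_zero _)
  have hfs : ((Nat.factorial (i + 1) : F)) = (i + 1) * (Nat.factorial i : F) := by
    rw [Nat.factorial_succ]; push_cast; ring
  rw [cb, cb, cb, h1, h2]
  rw [div_add_div _ _ hif1 hif, div_eq_div_iff hif1 (by exact mul_ne_zero hif1 hif)]
  rw [hfs]; ring

end Twist

section Alg

variable {F U : Type*} [Field F] [CharZero F] [Ring U] [Algebra F U]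

private def D (F : Type*) [Field F] {U : Type*} [Ring U] [Algebra F U] (f : U) : U →ₗ[F] U where
  toFun w := f * w - w * f
  map_add' a b := by noncomm_ring
  map_smul' c a := by simp [mul_smul_comm, smul_mul_assoc, smul_sub]

private lemma D_iter (f : U) (k : ℕ) (u : U) :
    (fun w => f * w - w * f)^[k] u = ((D F f) ^ k) u := by
  rw [Module.End.pow_apply]
  rfl

end Alg

set_option linter.unusedSectionVars false

section Main

variable {F U : Type*} [Field F] [CharZero F] [Ring U] [Algebra F U]

private lemma iter_zero (f : U) (i : ℕ) : (fun w => f * w - w * f)^[i] (0 : U) = 0 := by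
  apply Function.iterate_fixed; simp

private lemma iter_nil_mono (f : U) {k k' : ℕ} (h : k ≤ k') {u : U}
    (hu : (fun w => f * w - w * f)^[k] u = 0) :
    (fun w => f * w - w * f)^[k'] u = 0 := by
  obtain ⟨m, rfl⟩ := Nat.exists_eq_add_of_le h
  rw [add_comm, Function.iterate_add_apply, hu, iter_zero]

private lemma fg_pow (f g : U) (hfg : f * g = 1) (hgf : g * f = 1) (n : ℕ) :
    f ^ n * g ^ n = 1 := by
  have hc : Commute f g := hfg.trans hgf.symm
  rw [← hc.mul_pow, hfg, one_pow]

private lemma gf_pow (f g : U) (hfg : f * g = 1) (hgf : g * f = 1) (n : ℕ) :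
    g ^ n * f ^ n = 1 := by
  have hc : Commute g f := hgf.trans hfg.symm
  rw [← hc.mul_pow, hgf, one_pow]

private lemma iter_mul_g (f g : U) (hfg : f * g = 1) (hgf : g * f = 1)
    (i j : ℕ) (u : U) :
    (fun w => f * w - w * f)^[i] (u * g ^ j) = (fun w => f * w - w * f)^[i] u * g ^ j := by
  induction i with
  | zero => rfl
  | succ i ih =>
    rw [Function.iterate_succ_apply', Function.iterate_succ_apply', ih]
    have hc0 : Commute f g := hfg.trans hgf.symm
    have hc : f * g ^ j = g ^ j * f := (hc0.pow_right j).eq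
    rw [sub_mul, ← mul_assoc, mul_assoc _ (g ^ j) f, ← hc, ← mul_assoc]

end Main

section Theta

variable {F U : Type*} [Field F] [CharZero F] [Ring U] [Algebra F U]
variable (f g : U)

private lemma iter_add (k : ℕ) (u v : U) :
    (fun w => f * w - w * f)^[k] (u + v)
      = (fun w => f * w - w * f)^[k] u + (fun w => f * w - w * f)^[k] v := by
  induction k with
  | zero => rfl
  | succ k ih =>
    rw [Function.iterate_succ_apply', Function.iterate_succ_apply',
      Function.iterate_succ_apply', ih]
    noncomm_ring

private lemma thetaEq (Θ : F → U → U)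
    (hΘ : ∀ (x : F) (u : U) (k : ℕ), (fun w => f * w - w * f)^[k] u = 0 →
      Θ x u = ∑ i ∈ Finset.range k,
        ((∏ j ∈ Finset.range i, (x - (j : F))) / (Nat.factorial i : F)) •
          ((fun w => f * w - w * f)^[i] u * g ^ i))
    (x : F) (u : U) (k : ℕ) (hk : (fun w => f * w - w * f)^[k] u = 0) :
    Θ x u = ∑ i ∈ Finset.range k, cb x i • ((fun w => f * w - w * f)^[i] u * g ^ i) :=
  hΘ x u k hk

private lemma nil_theta (hfg : f * g = 1) (hgf : g * f = 1) (Θ : F → U → U)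
    (hΘ : ∀ (x : F) (u : U) (k : ℕ), (fun w => f * w - w * f)^[k] u = 0 →
      Θ x u = ∑ i ∈ Finset.range k,
        ((∏ j ∈ Finset.range i, (x - (j : F))) / (Nat.factorial i : F)) •
          ((fun w => f * w - w * f)^[i] u * g ^ i))
    (x : F) (u : U) (k : ℕ) (hk : (fun w => f * w - w * f)^[k] u = 0) :
    (fun w => f * w - w * f)^[k] (Θ x u) = 0 := by
  rw [thetaEq f g Θ hΘ x u k hk, D_iter (F := F) f, map_sum]
  refine Finset.sum_eq_zero fun i _ => ?_
  rw [map_smul, ← D_iter (F := F) f, iter_mul_g f g hfg hgf,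
    ← Function.iterate_add_apply, iter_nil_mono f (Nat.le_add_right k i) hk]
  simp

end Theta

section Theta2

variable {F U : Type*} [Field F] [CharZero F] [Ring U] [Algebra F U]
variable (f g : U) (hfg : f * g = 1) (hgf : g * f = 1)
variable (hnil : ∀ u : U, ∃ k : ℕ, (fun w => f * w - w * f)^[k] u = 0)
variable (Θ : F → U → U)
variable (hΘ : ∀ (x : F) (u : U) (k : ℕ), (fun w => f * w - w * f)^[k] u = 0 →
      Θ x u = ∑ i ∈ Finset.range k,
        ((∏ j ∈ Finset.range i, (x - (j : F))) / (Nat.factorial i : F)) •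
          ((fun w => f * w - w * f)^[i] u * g ^ i))

include hfg hgf hnil hΘ

private lemma theta_zero (u : U) : Θ 0 u = u := by
  obtain ⟨k, hk⟩ := hnil u
  have hk1 : (fun w => f * w - w * f)^[k + 1] u = 0 := iter_nil_mono f (Nat.le_succ k) hk
  rw [thetaEq f g Θ hΘ 0 u (k + 1) hk1, Finset.sum_range_succ']
  have hz : ∀ i ∈ Finset.range k,
      cb (0 : F) (i + 1) • ((fun w => f * w - w * f)^[i + 1] u * g ^ (i + 1)) = 0 := by
    intro i _; rw [cb_nat_zero, zero_smul]
  rw [Finset.sum_eq_zero hz, zero_add, cb_zero]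
  simp

private lemma theta_one (x : F) : Θ x (1 : U) = 1 := by
  have h1 : (fun w => f * w - w * f)^[1] (1 : U) = 0 := by simp
  rw [thetaEq f g Θ hΘ x 1 1 h1, Finset.sum_range_one, cb_zero]
  simp

private lemma theta_add (x : F) (u v : U) : Θ x (u + v) = Θ x u + Θ x v := by
  obtain ⟨a, ha⟩ := hnil u
  obtain ⟨b, hb⟩ := hnil v
  have hka : (fun w => f * w - w * f)^[a + b] u = 0 :=
    iter_nil_mono f (Nat.le_add_right a b) ha
  have hkb : (fun w => f * w - w * f)^[a + b] v = 0 :=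
    iter_nil_mono f (Nat.le_add_left b a) hb
  have huv : (fun w => f * w - w * f)^[a + b] (u + v) = 0 := by
    rw [iter_add, hka, hkb, add_zero]
  rw [thetaEq f g Θ hΘ x (u + v) (a + b) huv, thetaEq f g Θ hΘ x u (a + b) hka,
    thetaEq f g Θ hΘ x v (a + b) hkb, ← Finset.sum_add_distrib]
  refine Finset.sum_congr rfl fun i _ => ?_
  rw [iter_add, add_mul, smul_add]

private lemma theta_succ (x : F) (u : U) : Θ (x + 1) u = f * Θ x u * g := by
  obtain ⟨k, hk⟩ := hnil u
  have hk1 : (fun w => f * w - w * f)^[k + 1] u = 0 := iter_nil_mono f (Nat.le_succ k) hk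
  set T : ℕ → U := fun i => (fun w => f * w - w * f)^[i] u * g ^ i with hT
  have key : ∀ (i : ℕ) (A : U), f * (A * g ^ i) * g = A * g ^ i + (f * A - A * f) * g ^ (i + 1) := by
    intro i A
    have h1 : f * g ^ (i + 1) = g ^ i := by rw [pow_succ', ← mul_assoc, hfg, one_mul]
    have h2 : A * f * g ^ (i + 1) = A * g ^ i := by rw [mul_assoc, h1]
    have h3 : f * (A * g ^ i) * g = f * A * g ^ (i + 1) := by
      rw [← mul_assoc, mul_assoc (f * A) _ g, ← pow_succ]
    have h4 : f * A * g ^ (i + 1) = A * f * g ^ (i + 1) + (f * A - A * f) * g ^ (i + 1) := by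
      noncomm_ring
    rw [h3, h4, h2]
  have step : ∀ i : ℕ, f * T i * g = T i + T (i + 1) := by
    intro i
    show f * ((fun w => f * w - w * f)^[i] u * g ^ i) * g = _
    rw [key i ((fun w => f * w - w * f)^[i] u), hT]
    simp only [Function.iterate_succ_apply']
  have hTx : Θ x u = ∑ i ∈ Finset.range (k + 1), cb x i • T i :=
    thetaEq f g Θ hΘ x u (k + 1) hk1
  have hTx1 : Θ (x + 1) u = ∑ i ∈ Finset.range (k + 1), cb (x + 1) i • T i :=
    thetaEq f g Θ hΘ (x + 1) u (k + 1) hk1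
  have hmul : f * Θ x u * g = ∑ i ∈ Finset.range (k + 1), cb x i • (T i + T (i + 1)) := by
    rw [hTx, Finset.mul_sum, Finset.sum_mul]
    refine Finset.sum_congr rfl fun i _ => ?_
    rw [mul_smul_comm, smul_mul_assoc, step]
  have hTk1 : T (k + 1) = 0 := by rw [hT]; simp only [hk1, zero_mul]
  rw [hTx1, hmul]
  have lhs : (∑ i ∈ Finset.range (k + 1), cb (x + 1) i • T i)
      = (∑ i ∈ Finset.range k, cb x (i + 1) • T (i + 1))
        + (∑ i ∈ Finset.range k, cb x i • T (i + 1)) + T 0 := by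
    rw [Finset.sum_range_succ' (fun i => cb (x + 1) i • T i) k]
    have : ∀ i ∈ Finset.range k, cb (x + 1) (i + 1) • T (i + 1)
        = cb x (i + 1) • T (i + 1) + cb x i • T (i + 1) := by
      intro i _; rw [cb_pascal, add_smul]
    rw [Finset.sum_congr rfl this, Finset.sum_add_distrib, cb_zero, one_smul]
  have rhs : (∑ i ∈ Finset.range (k + 1), cb x i • (T i + T (i + 1)))
      = ((∑ i ∈ Finset.range k, cb x (i + 1) • T (i + 1)) + T 0)
        + ((∑ i ∈ Finset.range k, cb x i • T (i + 1)) + cb x k • T (k + 1)) := by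
    simp only [smul_add]
    rw [Finset.sum_add_distrib]
    congr 1
    · rw [Finset.sum_range_succ' (fun i => cb x i • T i) k, cb_zero, one_smul]
    · rw [Finset.sum_range_succ]
  rw [lhs, rhs, hTk1, smul_zero, add_zero]
  set S1 := ∑ i ∈ Finset.range k, cb x (i + 1) • T (i + 1)
  set S2 := ∑ i ∈ Finset.range k, cb x i • T (i + 1)
  abel

private lemma theta_nat_shift (n : ℕ) (y : F) (u : U) :
    Θ (y + n) u = f ^ n * Θ y u * g ^ n := by
  induction n with
  | zero => simp
  | succ n ih =>
    have hc : y + ((n + 1 : ℕ) : F) = (y + n) + 1 := by push_cast; ring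
    rw [hc, theta_succ f g hfg hgf hnil Θ hΘ, ih, pow_succ' f, pow_succ g]
    noncomm_ring

private lemma theta_nat (n : ℕ) (u : U) : Θ ((n : ℕ) : F) u = f ^ n * u * g ^ n := by
  have h := theta_nat_shift f g hfg hgf hnil Θ hΘ n 0 u
  rw [theta_zero f g hfg hgf hnil Θ hΘ u, zero_add] at h
  exact h

end Theta2

section Ext

variable {F U : Type*} [Field F] [CharZero F] [Ring U] [Algebra F U]

private noncomputable def cbP (F : Type*) [Field F] (i : ℕ) : Polynomial F :=
  (∏ j ∈ Finset.range i, (Polynomial.X - Polynomial.C (j : F))) *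
    Polynomial.C ((Nat.factorial i : F)⁻¹)

private lemma cbP_eval (x : F) (i : ℕ) : (cbP F i).eval x = cb x i := by
  simp [cbP, cb, Polynomial.eval_prod, div_eq_mul_inv]

private noncomputable def cbP' (y : F) (i : ℕ) : Polynomial F :=
  (∏ j ∈ Finset.range i, (Polynomial.X + Polynomial.C y - Polynomial.C (j : F))) *
    Polynomial.C ((Nat.factorial i : F)⁻¹)

private lemma cbP'_eval (x y : F) (i : ℕ) : (cbP' y i).eval x = cb (x + y) i := by
  simp [cbP', cb, Polynomial.eval_prod, div_eq_mul_inv]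

private lemma ext_from_nat {ι : Type*} (s : Finset ι) (p : ι → Polynomial F) (w : ι → U)
    (h : ∀ n : ℕ, ∑ i ∈ s, (p i).eval ((n : ℕ) : F) • w i = 0) (x : F) :
    ∑ i ∈ s, (p i).eval x • w i = 0 := by
  rw [← Module.forall_dual_apply_eq_zero_iff F]
  intro φ
  have hq : (∑ i ∈ s, Polynomial.C (φ (w i)) * p i) = 0 := by
    apply Polynomial.eq_zero_of_infinite_isRoot
    refine Set.Infinite.mono ?_ (Set.infinite_range_of_injective (Nat.cast_injective (R := F)))
    rintro _ ⟨n, rfl⟩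
    have hn := congrArg φ (h n)
    simp only [map_sum, map_smul, smul_eq_mul, map_zero] at hn
    simp only [Set.mem_setOf_eq, Polynomial.IsRoot, Polynomial.eval_finset_sum,
      Polynomial.eval_mul, Polynomial.eval_C]
    rw [← hn]
    exact Finset.sum_congr rfl fun i _ => mul_comm _ _
  have he := congrArg (Polynomial.eval x) hq
  simp only [Polynomial.eval_finset_sum, Polynomial.eval_mul, Polynomial.eval_C,
    Polynomial.eval_zero] at he
  rw [map_sum]
  simp only [map_smul, smul_eq_mul]
  rw [← he]
  exact Finset.sum_congr rfl fun i _ => mul_comm _ _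

end Ext

section Theta3

variable {F U : Type*} [Field F] [CharZero F] [Ring U] [Algebra F U]
variable (f g : U) (hfg : f * g = 1) (hgf : g * f = 1)
variable (hnil : ∀ u : U, ∃ k : ℕ, (fun w => f * w - w * f)^[k] u = 0)
variable (Θ : F → U → U)
variable (hΘ : ∀ (x : F) (u : U) (k : ℕ), (fun w => f * w - w * f)^[k] u = 0 →
      Θ x u = ∑ i ∈ Finset.range k,
        ((∏ j ∈ Finset.range i, (x - (j : F))) / (Nat.factorial i : F)) •
          ((fun w => f * w - w * f)^[i] u * g ^ i))

include hfg hgf hnil hΘ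

private lemma smul_mul_smul' (r s : F) (A B : U) :
    (r • A) * (s • B) = (r * s) • (A * B) := by
  rw [smul_mul_assoc, mul_smul_comm, smul_smul]

private lemma theta_mul (x : F) (u v : U) : Θ x (u * v) = Θ x u * Θ x v := by
  obtain ⟨a, ha⟩ := hnil u
  obtain ⟨b, hb⟩ := hnil v
  obtain ⟨c, hc⟩ := hnil (u * v)
  set s : Finset (ℕ ⊕ ℕ × ℕ) :=
    (Finset.range c).disjSum ((Finset.range a) ×ˢ (Finset.range b)) with hs
  set P : ℕ ⊕ ℕ × ℕ → Polynomial F :=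
    Sum.elim (fun i => cbP F i) (fun p => cbP F p.1 * cbP F p.2) with hP
  set W : ℕ ⊕ ℕ × ℕ → U :=
    Sum.elim (fun i => (fun w => f * w - w * f)^[i] (u * v) * g ^ i)
      (fun p => -(((fun w => f * w - w * f)^[p.1] u * g ^ p.1) *
        ((fun w => f * w - w * f)^[p.2] v * g ^ p.2))) with hW
  have key : ∀ z : F, ∑ i ∈ s, (P i).eval z • W i = Θ z (u * v) - Θ z u * Θ z v := by
    intro z
    rw [hs, Finset.sum_disjSum]
    have h1 : ∑ i ∈ Finset.range c, (P (Sum.inl i)).eval z • W (Sum.inl i) = Θ z (u * v) := by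
      rw [thetaEq f g Θ hΘ z (u * v) c hc]
      exact Finset.sum_congr rfl fun i _ => by
        simp only [hP, hW, Sum.elim_inl, cbP_eval]
    have h2 : ∑ p ∈ (Finset.range a) ×ˢ (Finset.range b),
        (P (Sum.inr p)).eval z • W (Sum.inr p) = -(Θ z u * Θ z v) := by
      rw [Finset.sum_product, thetaEq f g Θ hΘ z u a ha, thetaEq f g Θ hΘ z v b hb,
        Finset.sum_mul_sum, ← Finset.sum_neg_distrib]
      refine Finset.sum_congr rfl fun i _ => ?_
      rw [← Finset.sum_neg_distrib]
      refine Finset.sum_congr rfl fun j _ => ?_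
      simp only [hP, hW, Sum.elim_inr, Polynomial.eval_mul, cbP_eval, smul_neg]
      rw [smul_mul_smul' f g hfg hgf hnil Θ hΘ]
    rw [h1, h2, sub_eq_add_neg]
  have hnat : ∀ n : ℕ, ∑ i ∈ s, (P i).eval ((n : ℕ) : F) • W i = 0 := by
    intro n
    rw [key, theta_nat f g hfg hgf hnil Θ hΘ, theta_nat f g hfg hgf hnil Θ hΘ,
      theta_nat f g hfg hgf hnil Θ hΘ]
    have h3 : g ^ n * f ^ n = 1 := gf_pow f g hfg hgf n
    have h4 : f ^ n * u * g ^ n * (f ^ n * v * g ^ n) = f ^ n * (u * v) * g ^ n := by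
      calc f ^ n * u * g ^ n * (f ^ n * v * g ^ n)
          = f ^ n * (u * ((g ^ n * f ^ n) * v)) * g ^ n := by noncomm_ring
        _ = f ^ n * (u * v) * g ^ n := by rw [h3, one_mul]
    rw [h4, sub_self]
  have hx := ext_from_nat s P W hnat x
  rw [key x] at hx
  exact sub_eq_zero.mp hx

private lemma theta_comp (x y : F) (u : U) : Θ x (Θ y u) = Θ (x + y) u := by
  obtain ⟨a, ha⟩ := hnil u
  have hw : (fun w => f * w - w * f)^[a] (Θ y u) = 0 :=
    nil_theta f g hfg hgf Θ hΘ y u a ha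
  set s : Finset (ℕ ⊕ ℕ) := (Finset.range a).disjSum (Finset.range a) with hs
  set P : ℕ ⊕ ℕ → Polynomial F := Sum.elim (fun i => cbP F i) (fun i => cbP' y i) with hP
  set W : ℕ ⊕ ℕ → U :=
    Sum.elim (fun i => (fun w => f * w - w * f)^[i] (Θ y u) * g ^ i)
      (fun i => -((fun w => f * w - w * f)^[i] u * g ^ i)) with hW
  have key : ∀ z : F, ∑ i ∈ s, (P i).eval z • W i = Θ z (Θ y u) - Θ (z + y) u := by
    intro z
    rw [hs, Finset.sum_disjSum]
    have h1 : ∑ i ∈ Finset.range a, (P (Sum.inl i)).eval z • W (Sum.inl i) = Θ z (Θ y u) := by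
      rw [thetaEq f g Θ hΘ z (Θ y u) a hw]
      exact Finset.sum_congr rfl fun i _ => by
        simp only [hP, hW, Sum.elim_inl, cbP_eval]
    have h2 : ∑ i ∈ Finset.range a, (P (Sum.inr i)).eval z • W (Sum.inr i) = -(Θ (z + y) u) := by
      rw [thetaEq f g Θ hΘ (z + y) u a ha, ← Finset.sum_neg_distrib]
      refine Finset.sum_congr rfl fun i _ => ?_
      simp only [hP, hW, Sum.elim_inr, cbP'_eval, smul_neg]
    rw [h1, h2, sub_eq_add_neg]
  have hnat : ∀ n : ℕ, ∑ i ∈ s, (P i).eval ((n : ℕ) : F) • W i = 0 := by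
    intro n
    rw [key, theta_nat f g hfg hgf hnil Θ hΘ,
      ← theta_nat_shift f g hfg hgf hnil Θ hΘ n y u, add_comm (((n : ℕ) : F)) y, sub_self]
  have hx := ext_from_nat s P W hnat x
  rw [key x] at hx
  exact sub_eq_zero.mp hx

end Theta3

/- STATEMENT 17: the twist `Φ^x M` of a `U`-module `M` by the generalized conjugation
`Θ_x` (action `u ⋅ vˣ = (Θ_x(u) v)ˣ`) is a well-defined `U`-module,
`Φ^x(Φ^y M) ≅ Φ^{x+y} M`, and for integers `n` the module `Φ^n M` is isomorphic to `M`
(via `m ↦ gⁿ • m`, resp. `m ↦ fⁿ • m`). -/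
theorem twisted_module_well_defined {F U M : Type*} [Field F] [CharZero F]
    [Ring U] [Algebra F U] [AddCommGroup M] [Module U M]
    (f g : U) (hfg : f * g = 1) (hgf : g * f = 1)
    (hnil : ∀ u : U, ∃ k : ℕ, (fun w => f * w - w * f)^[k] u = 0)
    (Θ : F → U → U)
    (hΘ : ∀ (x : F) (u : U) (k : ℕ), (fun w => f * w - w * f)^[k] u = 0 →
      Θ x u = ∑ i ∈ Finset.range k,
        ((∏ j ∈ Finset.range i, (x - (j : F))) / (Nat.factorial i : F)) •
          ((fun w => f * w - w * f)^[i] u * g ^ i)) :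
    (∀ (x : F) (u v : U) (m : M), Θ x (u * v) • m = Θ x u • (Θ x v • m)) ∧
    (∀ (x : F) (m : M), Θ x (1 : U) • m = m) ∧
    (∀ (x : F) (u v : U) (m : M), Θ x (u + v) • m = Θ x u • m + Θ x v • m) ∧
    (∀ (x y : F) (u : U) (m : M), Θ x (Θ y u) • m = Θ (x + y) u • m) ∧
    (∀ (n : ℕ) (u : U) (m : M),
      g ^ n • (Θ (n : F) u • m) = u • (g ^ n • m) ∧
      f ^ n • (Θ (-(n : F)) u • m) = u • (f ^ n • m)) := by
  refine ⟨?_, ?_, ?_, ?_, ?_⟩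
  · intro x u v m
    rw [theta_mul f g hfg hgf hnil Θ hΘ, mul_smul]
  · intro x m
    rw [theta_one f g hfg hgf hnil Θ hΘ, one_smul]
  · intro x u v m
    rw [theta_add f g hfg hgf hnil Θ hΘ, add_smul]
  · intro x y u m
    rw [theta_comp f g hfg hgf hnil Θ hΘ]
  · intro n u m
    constructor
    · rw [← mul_smul, theta_nat f g hfg hgf hnil Θ hΘ, ← mul_smul]
      congr 1
      calc g ^ n * (f ^ n * u * g ^ n) = (g ^ n * f ^ n) * u * g ^ n := by noncomm_ring
        _ = u * g ^ n := by rw [gf_pow f g hfg hgf, one_mul]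
    · have hz : ((n : ℕ) : F) + -((n : ℕ) : F) = 0 := by ring
      have h1 : f ^ n * Θ (-(n : F)) u * g ^ n = u := by
        have := theta_comp f g hfg hgf hnil Θ hΘ ((n : ℕ) : F) (-(n : F)) u
        rw [hz, theta_zero f g hfg hgf hnil Θ hΘ,
          theta_nat f g hfg hgf hnil Θ hΘ] at this
        exact this
      have h2 : f ^ n * Θ (-(n : F)) u = u * f ^ n := by
        calc f ^ n * Θ (-(n : F)) u
            = f ^ n * Θ (-(n : F)) u * (g ^ n * f ^ n) := by
              rw [gf_pow f g hfg hgf, mul_one]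
          _ = (f ^ n * Θ (-(n : F)) u * g ^ n) * f ^ n := by rw [← mul_assoc]
          _ = u * f ^ n := by rw [h1]
      rw [← mul_smul, h2, mul_smul]
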